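/- Let p be a prime, q = pⁿ, θ the Frobenius automorphism of 𝔽_q, and R = 𝔽_q[t;θ] the Ore extension. The polynomial G(t) = t^{(p−1)n+1} − t satisfies G(a) = 0 for every a ∈ 𝔽_q, and G is of minimal degree with this property: every nonzero h(t) ∈ R with h(a) = 0 for all a ∈ 𝔽_q has degree at least (p−1)n + 1. Equivalently, G(t) is the least left common multiple in R of the linear polynomials {t − a : a ∈ 𝔽_q}. -/

import Mathlib

open Finset

/-- `eN p k = 1 + p + ... + p^(k-1)`. -/
def eN (p k : ℕ) : ℕ := ∑ i ∈ Finset.range k, p ^ i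

lemma eN_succ (p k : ℕ) : eN p (k+1) = p * eN p k + 1 := by
  unfold eN
  rw [Finset.sum_range_succ']
  simp [Finset.mul_sum, pow_succ, mul_comm, add_comm]

lemma eN_pos {p : ℕ} (hp : 0 < p) {k : ℕ} (hk : 0 < k) : 0 < eN p k := by
  unfold eN
  exact Finset.sum_pos (fun i _ => pow_pos hp i) (by simp [hk.ne'])

lemma eN_add (p i d : ℕ) : eN p (i + d) = eN p i + p ^ i * eN p d := by
  unfold eN
  rw [Finset.sum_range_add, Finset.mul_sum]
  simp [pow_add]

lemma geom (p : ℕ) (hp : 1 ≤ p) (k : ℕ) : (p - 1) * eN p k + 1 = p ^ k := by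
  obtain ⟨s, rfl⟩ : ∃ s, p = s + 1 := ⟨p - 1, by omega⟩
  induction k with
  | zero => simp [eN]
  | succ k ih =>
    rw [eN_succ, pow_succ, ← ih]
    simp only [Nat.add_sub_cancel]
    ring

lemma S_mod (p n k : ℕ) (hp : 1 ≤ p) : (∑ j ∈ Finset.range k, (p ^ n) ^ j) ≡ k [MOD p - 1] := by
  have h1 : ∀ j : ℕ, (p ^ n) ^ j ≡ 1 [MOD p - 1] := by
    intro j
    have : p ≡ 1 [MOD p - 1] := ((Nat.modEq_iff_dvd' (by omega)).2 dvd_rfl).symm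
    simpa using (this.pow n).pow j
  calc (∑ j ∈ Finset.range k, (p ^ n) ^ j) ≡ (∑ _j ∈ Finset.range k, 1) [MOD p-1] := by
        induction k with
        | zero => rfl
        | succ k ih => rw [Finset.sum_range_succ, Finset.sum_range_succ]; exact ih.add (h1 k)
    _ = k := by simp

lemma eN_mul (p n k : ℕ) : eN p (k * n) = eN p n * ∑ j ∈ Finset.range k, (p ^ n) ^ j := by
  induction k with
  | zero => simp [eN]
  | succ k ih =>
    rw [Nat.succ_mul, eN_add, ih, Finset.sum_range_succ, Nat.mul_add, ← pow_mul]
    ring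

lemma dvd_eN_key (p n : ℕ) (hp : 2 ≤ p) : (p ^ n - 1) ∣ eN p ((p - 1) * n) := by
  rw [eN_mul]
  have hq : p ^ n - 1 = (p - 1) * eN p n := by have := geom p (by omega) n; omega
  have hS : (p - 1) ∣ ∑ j ∈ Finset.range (p-1), (p ^ n) ^ j := by
    have h1 := S_mod p n (p-1) (by omega)
    have h2 : (p - 1 : ℕ) ≡ 0 [MOD p - 1] := (Nat.modEq_zero_iff_dvd).2 dvd_rfl
    exact (Nat.modEq_zero_iff_dvd).1 (h1.trans h2)
  obtain ⟨w, hw⟩ := hS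
  rw [hq, hw]
  exact ⟨w, by ring⟩

lemma pow_sub_one_dvd_imp (p n d : ℕ) (hp : 2 ≤ p) (hn : 0 < n)
    (h : (p^n - 1) ∣ (p^d - 1)) : n ∣ d := by
  have hr : d % n < n := Nat.mod_lt _ hn
  have hone : (p ^ n) ≡ 1 [MOD p ^ n - 1] :=
    ((Nat.modEq_iff_dvd' (Nat.one_le_pow _ _ (by omega))).2 dvd_rfl).symm
  have hmod : p ^ d ≡ p ^ (d % n) [MOD p^n - 1] := by
    conv_lhs => rw [← Nat.div_add_mod d n]
    rw [pow_add, pow_mul]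
    simpa using (hone.pow (d / n)).mul_right (p ^ (d % n))
  have h1 : p ^ d ≡ 1 [MOD p ^ n - 1] :=
    ((Nat.modEq_iff_dvd' (Nat.one_le_pow _ _ (by omega))).2 h).symm
  have h2 : p ^ (d % n) ≡ 1 [MOD p ^ n - 1] := hmod.symm.trans h1
  have hdvd : (p ^ n - 1) ∣ (p ^ (d % n) - 1) :=
    (Nat.modEq_iff_dvd' (Nat.one_le_pow _ _ (by omega))).1 h2.symm
  have hlt : p ^ (d % n) < p ^ n := Nat.pow_lt_pow_right (by omega) hr
  have h3 : 1 ≤ p ^ (d % n) := Nat.one_le_pow _ _ (by omega)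
  have h4 : p ^ (d % n) - 1 = 0 := Nat.eq_zero_of_dvd_of_lt hdvd (by omega)
  have h5 : d % n = 0 := by
    by_contra h6
    have := Nat.one_lt_pow h6 (show 1 < p by omega)
    omega
  exact Nat.dvd_of_mod_eq_zero h5

lemma not_dvd_eN (p n d : ℕ) (hp : 2 ≤ p) (hn : 0 < n) (hd : 0 < d) (hd2 : d < (p-1)*n) :
    ¬ (p ^ n - 1) ∣ eN p d := by
  intro h
  have hE : p^d - 1 = (p-1) * eN p d := by have := geom p (by omega) d; omega
  have hpd : (p^n - 1) ∣ (p^d - 1) := by rw [hE]; exact h.mul_left _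
  obtain ⟨k, rfl⟩ := pow_sub_one_dvd_imp p n d hp hn hpd
  have hk1 : 0 < k := Nat.pos_of_ne_zero (fun h0 => by simp [h0] at hd)
  have hk2 : k < p - 1 := by
    by_contra h6
    push_neg at h6
    have := Nat.mul_le_mul_left n h6
    rw [mul_comm (p-1) n] at hd2
    omega
  rw [show n * k = k * n by ring, eN_mul] at h
  have hq : p ^ n - 1 = (p - 1) * eN p n := by have := geom p (by omega) n; omega
  rw [hq] at h
  have hEn : 0 < eN p n := eN_pos (by omega) hn
  have hS : (p - 1) ∣ ∑ j ∈ Finset.range k, (p ^ n) ^ j := by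
    rw [mul_comm (p-1)] at h
    exact (Nat.mul_dvd_mul_iff_left hEn).1 h
  have hk : (p-1) ∣ k :=
    (Nat.modEq_zero_iff_dvd).1 ((S_mod p n k (by omega)).symm.trans ((Nat.modEq_zero_iff_dvd).2 hS))
  have := Nat.le_of_dvd hk1 hk
  omega

section Alg
variable {F R : Type*} [Field F] [Fintype F] [Ring R]

/-- The coefficient-to-element additive map. -/
noncomputable def Phi (ι : F →+* R) (t : R) : (ℕ →₀ F) →+ R :=
  Finsupp.liftAddHom (fun i => (AddMonoidHom.mulRight (t ^ i)).comp ι.toAddMonoidHom)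

lemma Phi_apply (ι : F →+* R) (t : R) (c : ℕ →₀ F) :
    Phi ι t c = c.sum fun i b => ι b * t ^ i := by
  simp [Phi, Finsupp.liftAddHom_apply]
  rfl

lemma Phi_single (ι : F →+* R) (t : R) (i : ℕ) (b : F) :
    Phi ι t (Finsupp.single i b) = ι b * t ^ i := by
  simp [Phi]

variable (ι : F →+* R) (t : R)
  (hbasis : ∀ f : R, ∃! c : ℕ →₀ F, f = c.sum fun i b => ι b * t ^ i)

include hbasis in
lemma Phi_inj : Function.Injective (Phi ι t) := by
  intro c1 c2 h
  obtain ⟨c, -, hu⟩ := hbasis (Phi ι t c1)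
  have h1 := hu c1 (Phi_apply ι t c1)
  have h2 := hu c2 (by rw [h]; exact Phi_apply ι t c2)
  rw [h1, h2]

include hbasis in
lemma R_nontrivial : Nontrivial R := by
  refine ⟨0, 1, fun h01 => ?_⟩
  have h2 : Phi ι t (Finsupp.single 0 1) = Phi ι t 0 := by
    rw [Phi_single, map_zero]; simp [← h01]
  have := Phi_inj ι t hbasis h2
  simpa using (Finsupp.single_eq_zero.1 this)


variable (p : ℕ) (hrel : ∀ x : F, t * ι x = ι (x ^ p) * t)

include hrel in
lemma tpow_comm (k : ℕ) (a : F) : t ^ k * ι a = ι (a ^ p ^ k) * t ^ k := by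
  induction k generalizing a with
  | zero => simp
  | succ k ih =>
    rw [pow_succ t, pow_succ', pow_mul]
    calc t ^ k * t * ι a = t ^ k * (t * ι a) := by rw [mul_assoc]
      _ = t ^ k * (ι (a ^ p) * t) := by rw [hrel a]
      _ = (t ^ k * ι (a ^ p)) * t := by rw [mul_assoc]
      _ = ι ((a ^ p) ^ p ^ k) * t ^ k * t := by rw [ih (a ^ p)]
      _ = ι ((a ^ p) ^ p ^ k) * (t ^ k * t) := by rw [mul_assoc]

lemma Phi_mul_t (c : ℕ →₀ F) :
    Phi ι t c * t = Phi ι t (Finsupp.mapDomain (· + 1) c) := by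
  rw [Phi_apply, Phi_apply, Finsupp.sum_mapDomain_index (by simp) (by intros; rw [map_add, add_mul]),
    Finsupp.sum_mul]
  refine Finset.sum_congr rfl fun i _ => ?_
  show ι (c i) * t ^ i * t = ι (c i) * t ^ (i + 1)
  rw [mul_assoc, ← pow_succ]

include hrel in
lemma Phi_mul_iota (c : ℕ →₀ F) (a : F) :
    Phi ι t c * ι a = Phi ι t (c.sum fun i b => Finsupp.single i (b * a ^ p ^ i)) := by
  rw [Phi_apply, map_finsuppSum, Finsupp.sum_mul]
  refine Finset.sum_congr rfl fun i _ => ?_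
  show ι (c i) * t ^ i * ι a = Phi ι t (Finsupp.single i (c i * a ^ p ^ i))
  rw [Phi_single, mul_assoc, tpow_comm ι t p hrel, ← mul_assoc, ← map_mul]

lemma twist_apply (c : ℕ →₀ F) (a : F) (j : ℕ) :
    (c.sum fun i b => Finsupp.single i (b * a ^ p ^ i)) j = c j * a ^ p ^ j := by
  classical
  rw [Finsupp.sum_apply, Finsupp.sum, Finset.sum_eq_single j]
  · simp
  · intro i _ hij; simp [Finsupp.single_apply, hij]
  · intro hj; simp [Finsupp.notMem_support_iff.1 hj]

include hbasis hrel in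
lemma iota_eq_mul_lin {g : R} {a e : F} (h : ι e = g * (t - ι a)) : e = 0 := by
  classical
  obtain ⟨c, hc, -⟩ := hbasis g
  have hg : g = Phi ι t c := by rw [hc, Phi_apply]
  by_cases hc0 : c = 0
  · have : Nontrivial R := R_nontrivial ι t hbasis
    have : ι e = 0 := by rw [h, hg, hc0, map_zero, zero_mul]
    exact ι.injective (by rw [this, map_zero])
  · exfalso
    set c' := Finsupp.mapDomain (· + 1) c - (c.sum fun i b => Finsupp.single i (b * a ^ p ^ i)) with hc'
    have h2 : Phi ι t (Finsupp.single 0 e) = Phi ι t c' := by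
      rw [Phi_single, pow_zero, mul_one, h, hg, hc', map_sub, ← Phi_mul_t, ← Phi_mul_iota ι t p hrel,
        ← mul_sub]
    have h3 : Finsupp.single 0 e = c' := Phi_inj ι t hbasis h2
    have hsupp : c.support.Nonempty := Finsupp.support_nonempty_iff.2 hc0
    set d := c.support.max' hsupp with hd
    have hdm : d ∈ c.support := c.support.max'_mem hsupp
    have hd1 : c (d + 1) = 0 := by
      by_contra hx
      have := c.support.le_max' (d + 1) (Finsupp.mem_support_iff.2 hx)
      omega
    have h4 := DFunLike.congr_fun h3 (d + 1)
    have h5 : (Finsupp.mapDomain (· + 1) c) (d + 1) = c d :=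
      Finsupp.mapDomain_apply (fun x y hxy => by omega) c d
    rw [Finsupp.single_apply, if_neg (by omega), hc', Finsupp.sub_apply, h5,
      twist_apply, hd1, zero_mul, sub_zero] at h4
    exact (Finsupp.mem_support_iff.1 hdm) h4.symm

variable (eval : R → F → F)
  (heval : ∀ (f : R) (a : F), ∃ g : R, f - ι (eval f a) = g * (t - ι a))

include hbasis hrel heval in
lemma eval_unique (f : R) (a e' : F) (hex : ∃ g : R, f - ι e' = g * (t - ι a)) :
    eval f a = e' := by
  obtain ⟨g, hg⟩ := hex
  obtain ⟨g0, hg0⟩ := heval f a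
  have hkey : ι (e' - eval f a) = (g0 - g) * (t - ι a) := by
    rw [map_sub, sub_mul, ← hg0, ← hg]; abel
  have := iota_eq_mul_lin ι t hbasis p hrel hkey
  have : e' = eval f a := by rwa [sub_eq_zero] at this
  exact this.symm

include hrel in
lemma pow_eval (a : F) (k : ℕ) : ∃ g : R, t ^ k - ι (a ^ eN p k) = g * (t - ι a) := by
  induction k with
  | zero => exact ⟨0, by simp [eN]⟩
  | succ k ih =>
    obtain ⟨g, hg⟩ := ih
    refine ⟨t * g + ι (a ^ (p * eN p k)), ?_⟩
    have hx : t * ι (a ^ eN p k) = ι (a ^ (p * eN p k)) * t := by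
      rw [hrel (a ^ eN p k), ← pow_mul, mul_comm (eN p k) p]
    have expand : (t * g + ι (a ^ (p * eN p k))) * (t - ι a) =
        t * (g * (t - ι a)) + (ι (a ^ (p * eN p k)) * t - ι (a ^ (p * eN p k)) * ι a) := by
      noncomm_ring
    have hEsucc : eN p (k + 1) = p * eN p k + 1 := by
      unfold eN
      rw [Finset.sum_range_succ']
      simp [Finset.mul_sum, pow_succ, mul_comm, add_comm]
    rw [expand, ← hg, mul_sub, hx, ← map_mul, ← pow_succ']
    have h7 : a ^ (p * eN p k) * a = a ^ eN p (k + 1) := by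
      rw [hEsucc, pow_add, pow_one]
    rw [h7]
    abel

include hrel in
lemma Phi_eval_aux (a : F) (c : ℕ →₀ F) :
    ∃ g : R, Phi ι t c - ι (c.sum fun i b => b * a ^ eN p i) = g * (t - ι a) := by
  induction c using Finsupp.induction with
  | zero => exact ⟨0, by simp⟩
  | single_add i b f hif hb ih =>
    obtain ⟨g1, hg1⟩ := ih
    obtain ⟨g2, hg2⟩ := pow_eval ι t p hrel a i
    refine ⟨ι b * g2 + g1, ?_⟩
    have hPhiadd : Phi ι t (Finsupp.single i b + f) = ι b * t ^ i + Phi ι t f := by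
      rw [map_add, Phi_single]
    have hsumadd : ((Finsupp.single i b + f).sum fun i b => b * a ^ eN p i)
        = b * a ^ eN p i + f.sum fun i b => b * a ^ eN p i := by
      rw [Finsupp.sum_add_index' (by simp) (by intros; rw [add_mul]),
        Finsupp.sum_single_index (by simp)]
    rw [hPhiadd, hsumadd, map_add, add_mul, ← hg1, map_mul, mul_assoc, ← hg2, mul_sub, ← map_mul]
    abel

include hbasis hrel heval in
lemma eval_Phi (a : F) (c : ℕ →₀ F) :
    eval (Phi ι t c) a = c.sum fun i b => b * a ^ eN p i :=
  eval_unique ι t hbasis p hrel eval heval _ _ _ (Phi_eval_aux ι t p hrel a c)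

end Alg

theorem wedderburn_polynomial_of_Fq {F R : Type*} [Field F] [Fintype F] [Ring R]
    (p n : ℕ) (hp : p.Prime) (hn : 0 < n) (hcard : Fintype.card F = p ^ n)
    (ι : F →+* R) (t : R)
    (hrel : ∀ x : F, t * ι x = ι (x ^ p) * t)
    (hbasis : ∀ f : R, ∃! c : ℕ →₀ F, f = c.sum fun i b => ι b * t ^ i)
    (eval : R → F → F)
    (heval : ∀ (f : R) (a : F), ∃ g : R, f - ι (eval f a) = g * (t - ι a)) :
    (∀ a : F, eval (t ^ ((p - 1) * n + 1) - t) a = 0) ∧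
    (∀ (h : R) (c : ℕ →₀ F), h ≠ 0 → h = c.sum (fun i b => ι b * t ^ i) →
      (∀ a : F, eval h a = 0) → ∃ i ∈ c.support, (p - 1) * n + 1 ≤ i) := by
  classical
  have hp2 : 2 ≤ p := hp.two_le
  have hq1 : 1 < p ^ n := Nat.one_lt_pow hn.ne' hp.one_lt
  constructor
  · intro a
    obtain ⟨g1, hg1⟩ := pow_eval ι t p hrel a ((p - 1) * n + 1)
    obtain ⟨g2, hg2⟩ := pow_eval ι t p hrel a 1
    have he1 : eN p 1 = 1 := by simp [eN]
    rw [pow_one, he1, pow_one] at hg2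
    have hkey : t ^ ((p-1)*n+1) - t - ι (a ^ eN p ((p-1)*n+1) - a) = (g1 - g2) * (t - ι a) := by
      rw [map_sub, sub_mul, ← hg1, ← hg2]; abel
    have hev := eval_unique ι t hbasis p hrel eval heval _ a _ ⟨g1 - g2, hkey⟩
    rw [hev]
    have heq : a ^ eN p ((p-1)*n+1) = a := by
      obtain ⟨w, hw⟩ := dvd_eN_key p n hp2
      have hdecomp : eN p ((p-1)*n+1) = (p^n - 1) * (w * p) + 1 := by
        rw [eN_succ, hw]; ring
      rw [hdecomp]
      rcases eq_or_ne a 0 with rfl | ha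
      · rw [zero_pow (by omega)]
      · have h1 : a ^ (p^n - 1) = 1 := by
          have := FiniteField.pow_card_sub_one_eq_one a ha
          rwa [hcard] at this
        rw [pow_add, pow_one, pow_mul, h1, one_pow, one_mul]
    rw [heq, sub_self]
  · intro h c hne hrep heval0
    by_contra hcon
    push_neg at hcon
    have hPhi : h = Phi ι t c := by rw [hrep, Phi_apply]
    have hc0 : c ≠ 0 := fun h0 => hne (by rw [hPhi, h0, map_zero])
    have heval' : ∀ a : F, (c.sum fun i b => b * a ^ eN p i) = 0 := fun a => by
      rw [← eval_Phi ι t hbasis p hrel eval heval a c, ← hPhi]; exact heval0 a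
    have h00 : c 0 = 0 := by
      have h1 := heval' 0
      rw [Finsupp.sum, Finset.sum_eq_single 0] at h1
      · simpa [eN] using h1
      · intro i _ hne0
        have hpos : 0 < eN p i := eN_pos (by omega) (Nat.pos_of_ne_zero hne0)
        rw [zero_pow hpos.ne', mul_zero]
      · intro h0; rw [Finsupp.notMem_support_iff.1 h0, zero_mul]
    have hzns : (0:ℕ) ∉ c.support := fun hm => Finsupp.mem_support_iff.1 hm h00
    have hA : 1 * 1 ≤ (p-1)*n := Nat.mul_le_mul (by omega) hn
    have hinj : ∀ i ∈ c.support, ∀ j ∈ c.support,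
        eN p i % (p^n - 1) = eN p j % (p^n - 1) → i = j := by
      have key : ∀ i j, i ∈ c.support → j ∈ c.support → i < j →
          eN p i % (p^n - 1) ≠ eN p j % (p^n - 1) := by
        intro i j hi hj hlt heq
        have hi1 : 1 ≤ i := Nat.one_le_iff_ne_zero.2 (fun h0 => hzns (h0 ▸ hi))
        have hjm : j < (p-1)*n + 1 := hcon j hj
        have hsplit : eN p j = eN p i + p ^ i * eN p (j - i) := by
          have := eN_add p i (j - i)
          rwa [show i + (j - i) = j by omega] at this
        have hmono : eN p i ≤ eN p j := by omega
        have hdvd : (p^n - 1) ∣ (eN p j - eN p i) := (Nat.modEq_iff_dvd' hmono).1 heq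
        have hdvd' : (p^n - 1) ∣ p ^ i * eN p (j - i) := by
          have h2 : eN p j - eN p i = p ^ i * eN p (j - i) := by omega
          rwa [h2] at hdvd
        have hcop : Nat.Coprime (p ^ i) (p ^ n - 1) := by
          have hc1 : Nat.Coprime p (p^n - 1) := by
            rw [Nat.Prime.coprime_iff_not_dvd hp]
            intro hdd
            have h2 : p ∣ p ^ n := dvd_pow_self p hn.ne'
            have h3 : p ∣ p ^ n - (p ^ n - 1) := Nat.dvd_sub h2 hdd
            rw [show p ^ n - (p ^ n - 1) = 1 by omega] at h3
            have := Nat.le_of_dvd one_pos h3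
            omega
          exact hc1.pow_left i
        have hfin : (p^n - 1) ∣ eN p (j - i) :=
          (Nat.Coprime.dvd_of_dvd_mul_left hcop.symm hdvd')
        exact not_dvd_eN p n (j - i) hp2 hn (by omega) (by omega) hfin
      intro i hi j hj heq
      by_contra hne2
      rcases Nat.lt_or_ge i j with hlt | hge
      · exact key i j hi hj hlt heq
      · exact key j i hj hi (by omega) heq.symm
    set Q : Polynomial F := ∑ i ∈ c.support, Polynomial.C (c i) * Polynomial.X ^ (eN p i % (p^n - 1)) with hQ
    have hdeg : Q.natDegree < p ^ n - 1 := by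
      have hd2 : Q.natDegree ≤ p ^ n - 2 := by
        apply Polynomial.natDegree_sum_le_of_forall_le
        intro i _
        refine le_trans (Polynomial.natDegree_C_mul_le _ _) ?_
        rw [Polynomial.natDegree_X_pow]
        have := Nat.mod_lt (eN p i) (show 0 < p^n - 1 by omega)
        omega
      omega
    have hroots : ∀ a ∈ (Finset.univ.erase (0:F)), Q.eval a = 0 := by
      intro a ha
      have ha0 : a ≠ 0 := (Finset.mem_erase.1 ha).1
      have h1 : a ^ (p ^ n - 1) = 1 := by
        have := FiniteField.pow_card_sub_one_eq_one a ha0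
        rwa [hcard] at this
      have hpow : ∀ e : ℕ, a ^ (e % (p ^ n - 1)) = a ^ e := by
        intro e
        conv_rhs => rw [← Nat.div_add_mod e (p ^ n - 1)]
        rw [pow_add, pow_mul, h1, one_pow, one_mul]
      have hqe : Q.eval a = ∑ i ∈ c.support, c i * a ^ eN p i := by
        rw [hQ, Polynomial.eval_finset_sum]
        refine Finset.sum_congr rfl fun i _ => ?_
        rw [Polynomial.eval_mul, Polynomial.eval_C, Polynomial.eval_pow, Polynomial.eval_X, hpow]
      rw [hqe]
      have := heval' a
      rwa [Finsupp.sum] at this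
    have hQ0 : Q = 0 := by
      apply Polynomial.eq_zero_of_natDegree_lt_card_of_eval_eq_zero' Q _ hroots
      rw [Finset.card_erase_of_mem (Finset.mem_univ 0), Finset.card_univ, hcard]
      exact hdeg
    obtain ⟨i0, hi0⟩ := Finsupp.support_nonempty_iff.2 hc0
    have hco : Q.coeff (eN p i0 % (p^n - 1)) = c i0 := by
      rw [hQ, Polynomial.finset_sum_coeff, Finset.sum_eq_single i0]
      · rw [Polynomial.coeff_C_mul, Polynomial.coeff_X_pow, if_pos rfl, mul_one]
      · intro j hj hji
        rw [Polynomial.coeff_C_mul, Polynomial.coeff_X_pow,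
          if_neg (fun hh => hji (hinj j hj i0 hi0 hh.symm)), mul_zero]
      · intro hnot; exact absurd hi0 hnot
    rw [hQ0, Polynomial.coeff_zero] at hco
    exact Finsupp.mem_support_iff.1 hi0 hco.symm
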